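/- Let 𝒞 be a (Quillen) model category, let Â be a cofibrant object, and let B, B′, B̂ be objects. Let f : Â → B, f′ : Â → B′, f̄ : Â → B̂, β : B̂ → B and β′ : B̂ → B′ be morphisms such that the induced morphism (β, β′) : B̂ → B × B′ is a fibration, and such that the morphism (β∘f̄, β′∘f̄) : Â → B × B′ is left homotopic to (f, f′) : Â → B × B′. Then there exists a morphism f̂ : Â → B̂ such that f̂ is left homotopic to f̄, β∘f̂ = f and β′∘f̂ = f′. -/

import Mathlib

open CategoryTheory CategoryTheory.Limits

universe v u

/-- A morphism `g` is a retract of a morphism `f` (in the arrow category). -/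
def IsRetractOfMap {C : Type u} [Category.{v} C] {A B X Y : C}
    (g : A ⟶ B) (f : X ⟶ Y) : Prop :=
  ∃ (iA : A ⟶ X) (rA : X ⟶ A) (iB : B ⟶ Y) (rB : Y ⟶ B),
    iA ≫ rA = 𝟙 A ∧ iB ≫ rB = 𝟙 B ∧ iA ≫ f = g ≫ iB ∧ rA ≫ g = f ≫ rB

/-- A (Quillen) model category: a complete and cocomplete category together with three
classes of morphisms — weak equivalences, cofibrations and fibrations — satisfying
Quillen's axioms: two-out-of-three for weak equivalences, closure of all three classes
under retracts, the lifting axiom for (acyclic cofibration, fibration) and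
(cofibration, acyclic fibration) pairs, and the two factorization axioms. -/
class ModelCategory (C : Type u) [Category.{v} C] [HasLimits C] [HasColimits C] where
  weq : MorphismProperty C
  cof : MorphismProperty C
  fib : MorphismProperty C
  weq_comp : ∀ {X Y Z : C} (f : X ⟶ Y) (g : Y ⟶ Z), weq f → weq g → weq (f ≫ g)
  weq_of_comp_left : ∀ {X Y Z : C} (f : X ⟶ Y) (g : Y ⟶ Z), weq f → weq (f ≫ g) → weq g
  weq_of_comp_right : ∀ {X Y Z : C} (f : X ⟶ Y) (g : Y ⟶ Z), weq g → weq (f ≫ g) → weq f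
  weq_retract : ∀ {A B X Y : C} (g : A ⟶ B) (f : X ⟶ Y),
    IsRetractOfMap g f → weq f → weq g
  cof_retract : ∀ {A B X Y : C} (g : A ⟶ B) (f : X ⟶ Y),
    IsRetractOfMap g f → cof f → cof g
  fib_retract : ∀ {A B X Y : C} (g : A ⟶ B) (f : X ⟶ Y),
    IsRetractOfMap g f → fib f → fib g
  lifting_acyclic_cof : ∀ {A B X Y : C} (i : A ⟶ B) (p : X ⟶ Y),
    cof i → weq i → fib p → HasLiftingProperty i p
  lifting_acyclic_fib : ∀ {A B X Y : C} (i : A ⟶ B) (p : X ⟶ Y),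
    cof i → fib p → weq p → HasLiftingProperty i p
  factor_cof_acyclicFib : ∀ {X Y : C} (f : X ⟶ Y),
    ∃ (Z : C) (g : X ⟶ Z) (h : Z ⟶ Y), cof g ∧ fib h ∧ weq h ∧ g ≫ h = f
  factor_acyclicCof_fib : ∀ {X Y : C} (f : X ⟶ Y),
    ∃ (Z : C) (g : X ⟶ Z) (h : Z ⟶ Y), cof g ∧ weq g ∧ fib h ∧ g ≫ h = f

/-- An object is cofibrant if the unique map from the initial object is a cofibration. -/
def Cofibrant {C : Type u} [Category.{v} C] [HasLimits C] [HasColimits C]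
    [ModelCategory C] (A : C) : Prop :=
  ModelCategory.cof (initial.to A)

/-- Two morphisms `f₀, f₁ : A ⟶ X` are left homotopic if there is a cylinder object for
`A` — a factorization of the fold map `A ⊔ A → A` as a cofibration `(i₀, i₁)` followed
by a weak equivalence `p` — and a morphism `H : Cyl(A) ⟶ X` with `i₀ ≫ H = f₀` and
`i₁ ≫ H = f₁`. -/
def LeftHomotopic {C : Type u} [Category.{v} C] [HasLimits C] [HasColimits C]
    [ModelCategory C] {A X : C} (f₀ f₁ : A ⟶ X) : Prop :=
  ∃ (Z : C) (i₀ i₁ : A ⟶ Z) (p : Z ⟶ A),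
    ModelCategory.cof (coprod.desc i₀ i₁) ∧ ModelCategory.weq p ∧
    i₀ ≫ p = 𝟙 A ∧ i₁ ≫ p = 𝟙 A ∧
    ∃ H : Z ⟶ X, i₀ ≫ H = f₀ ∧ i₁ ≫ H = f₁

/-- **Strictifying a homotopy commutative triangle** (Lemma 3.6 of the paper).

Let `Ahat` be a cofibrant object of a model category, and let `f : Ahat ⟶ B`,
`f' : Ahat ⟶ B'`, `fbar : Ahat ⟶ Bhat`, `β : Bhat ⟶ B`, `β' : Bhat ⟶ B'` be morphisms
such that `(β, β') : Bhat ⟶ B × B'` is a fibration and `(β ∘ fbar, β' ∘ fbar)` is left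
homotopic to `(f, f') : Ahat ⟶ B × B'`.  Then there is `fhat : Ahat ⟶ Bhat` left
homotopic to `fbar` with `β ∘ fhat = f` and `β' ∘ fhat = f'`. -/
theorem exists_strict_lift_of_homotopy_commutative
    {C : Type u} [Category.{v} C] [HasLimits C] [HasColimits C] [ModelCategory C]
    {Ahat B B' Bhat : C} (hA : Cofibrant Ahat)
    (f : Ahat ⟶ B) (f' : Ahat ⟶ B') (fbar : Ahat ⟶ Bhat)
    (β : Bhat ⟶ B) (β' : Bhat ⟶ B')
    (hfib : ModelCategory.fib (prod.lift β β'))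
    (hhtpy : LeftHomotopic (prod.lift (fbar ≫ β) (fbar ≫ β')) (prod.lift f f')) :
    ∃ fhat : Ahat ⟶ Bhat, LeftHomotopic fhat fbar ∧ fhat ≫ β = f ∧ fhat ≫ β' = f' := by 
  classical
  obtain ⟨Z, i₀, i₁, p, hcof, hweq, hi₀p, hi₁p, H, hH0, hH1⟩ := hhtpy
  -- weak equivalence of the identity
  have wid : ModelCategory.weq (𝟙 Ahat) := by
    refine ModelCategory.weq_retract _ p ⟨i₀, p, 𝟙 _, 𝟙 _, hi₀p, by simp, ?_, by simp⟩ hweq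
    simp [hi₀p]
  have wi₀ : ModelCategory.weq i₀ :=
    ModelCategory.weq_of_comp_right i₀ p hweq (by rw [hi₀p]; exact wid)
  -- cofibrancy of i₀ via factorization and retract argument
  obtain ⟨W, c, h, hc, hh, hwh, hch⟩ := ModelCategory.factor_cof_acyclicFib i₀
  -- lift t : Ahat ⟶ W with t ≫ h = i₁
  have hlift_init : HasLiftingProperty (initial.to Ahat) h :=
    ModelCategory.lifting_acyclic_fib _ _ hA hh hwh
  have sq1 : CommSq (initial.to W) (initial.to Ahat) h i₁ := ⟨by
    apply Subsingleton.elim⟩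
  haveI := hlift_init
  haveI := HasLiftingProperty.sq_hasLift sq1
  obtain ⟨t, ht⟩ : ∃ t : Ahat ⟶ W, t ≫ h = i₁ := ⟨sq1.lift, sq1.fac_right⟩
  -- lift l : Z ⟶ W with (coprod.desc i₀ i₁) ≫ l = coprod.desc c t and l ≫ h = 𝟙 Z
  have hlift_d : HasLiftingProperty (coprod.desc i₀ i₁) h :=
    ModelCategory.lifting_acyclic_fib _ _ hcof hh hwh
  have sq2 : CommSq (coprod.desc c t) (coprod.desc i₀ i₁) h (𝟙 Z) := ⟨by
    apply coprod.hom_ext <;> simp [hch, ht]⟩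
  haveI := hlift_d
  haveI := HasLiftingProperty.sq_hasLift sq2
  obtain ⟨l, hl1, hl2⟩ : ∃ l : Z ⟶ W, coprod.desc i₀ i₁ ≫ l = coprod.desc c t ∧ l ≫ h = 𝟙 Z :=
    ⟨sq2.lift, sq2.fac_left, sq2.fac_right⟩
  have hi₀l : i₀ ≫ l = c := by
    have := coprod.inl ≫= hl1
    rw [coprod.inl_desc_assoc, coprod.inl_desc] at this; exact this
  have hcofi₀ : ModelCategory.cof i₀ :=
    ModelCategory.cof_retract i₀ c ⟨𝟙 _, 𝟙 _, l, h, by simp, by simpa using hl2,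
      by simpa using hi₀l.symm, by simpa using hch.symm⟩ hc
  -- lift K : Z ⟶ Bhat against the fibration
  have hlift : HasLiftingProperty i₀ (prod.lift β β') :=
    ModelCategory.lifting_acyclic_cof i₀ _ hcofi₀ wi₀ hfib
  have sq3 : CommSq fbar i₀ (prod.lift β β') H := ⟨by
    rw [hH0]; apply Limits.prod.hom_ext <;> simp⟩
  haveI := hlift
  haveI := HasLiftingProperty.sq_hasLift sq3
  obtain ⟨K, hK1, hK2⟩ : ∃ K : Z ⟶ Bhat, i₀ ≫ K = fbar ∧ K ≫ prod.lift β β' = H :=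
    ⟨sq3.lift, sq3.fac_left, sq3.fac_right⟩
  refine ⟨i₁ ≫ K, ?_, ?_, ?_⟩
  · -- left homotopy via swapped cylinder
    have hswap : ModelCategory.cof (coprod.desc i₁ i₀) := by
      refine ModelCategory.cof_retract _ (coprod.desc i₀ i₁)
        ⟨coprod.desc coprod.inr coprod.inl, coprod.desc coprod.inr coprod.inl, 𝟙 _, 𝟙 _,
          ?_, by simp, ?_, ?_⟩ hcof
      · apply coprod.hom_ext <;> simp <;> rw [coprod.inr_desc, coprod.inl_desc]
      · apply coprod.hom_ext
        · simp; rw [coprod.inl_desc, coprod.inr_desc, coprod.inl_desc]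
        · simp; rw [coprod.inr_desc, coprod.inl_desc, coprod.inr_desc]
      · apply coprod.hom_ext
        · simp; rw [coprod.inl_desc, coprod.inr_desc, coprod.inl_desc]
        · simp; rw [coprod.inr_desc, coprod.inl_desc, coprod.inr_desc]
    exact ⟨Z, i₁, i₀, p, hswap, hweq, hi₁p, hi₀p, K, rfl, hK1⟩
  · have : K ≫ β = H ≫ prod.fst := by
      rw [← hK2]; simp; rw [prod.lift_fst]
    rw [Category.assoc, this, ← Category.assoc, hH1]; rw [prod.lift_fst]
  · have : K ≫ β' = H ≫ prod.snd := by
      rw [← hK2]; simp; rw [prod.lift_snd]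
    rw [Category.assoc, this, ← Category.assoc, hH1]; rw [prod.lift_snd]
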